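/- Let n ≥ 2 and let ∼ be a congruence of the near-semiring 𝒩 that is not the universal relation 𝒩 × 𝒩. If there exist two distinct nonzero elements f, g ∈ 𝒩 (that is, f, g ∈ A^+(B_n) with f ≠ g) such that f ∼ g, then ∼ equals (A^+(B_n) × A^+(B_n)) ∪ {(0,0)}. -/

import Mathlib

/-!
Common setup: the Brandt semigroup `B n`, self-maps with pointwise addition and
composition product, affine maps, the affine near-semiring `A⁺(Bₙ)`, and the
zero-symmetric near-semiring `𝒩 = A⁺(Bₙ) ∪ {0}`.
-/

/-- The Brandt semigroup `Bₙ`: pairs `(i,j)` with `i,j ∈ [n]`, together with the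
zero element `ϑ` (represented by `none`). -/
abbrev B (n : ℕ) : Type := Option (Fin n × Fin n)

/-- Addition in the Brandt semigroup: `(i,j)+(k,l) = (i,l)` if `j = k`, and `ϑ` otherwise;
`ϑ` is absorbing. -/
def badd {n : ℕ} : B n → B n → B n
  | some (i, j), some (k, l) => if j = k then some (i, l) else none
  | _, _ => none

/-- Pointwise addition of self-maps of `B n`:  `x(f+g) = xf + xg`. -/
def madd {n : ℕ} (f g : B n → B n) : B n → B n := fun x => badd (f x) (g x)

/-- The product of self-maps of `B n`: `x(fg) = (xf)g`. -/
def mcomp {n : ℕ} (f g : B n → B n) : B n → B n := fun x => g (f x)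

/-- An additive endomorphism of the Brandt semigroup. -/
def IsEndo {n : ℕ} (e : B n → B n) : Prop := ∀ a b, e (badd a b) = badd (e a) (e b)

/-- An affine map: the pointwise sum of an additive endomorphism and a constant map. -/
def IsAffine {n : ℕ} (f : B n → B n) : Prop :=
  ∃ e c, IsEndo e ∧ ∀ x, f x = badd (e x) c

/-- `A⁺(Bₙ)`: the subsemigroup of `(M(Bₙ), +)` generated by the affine maps. -/
inductive Aplus (n : ℕ) : (B n → B n) → Prop
  | affine {f : B n → B n} : IsAffine f → Aplus n f
  | add {f g : B n → B n} : Aplus n f → Aplus n g → Aplus n (madd f g)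

lemma isEndo_constBot {n : ℕ} : IsEndo (fun _ : B n => (none : B n)) := by
  intro a b; rfl

lemma isEndo_constIdem {n : ℕ} (p : Fin n) :
    IsEndo (fun _ : B n => (some (p, p) : B n)) := by
  intro a b; simp [badd]

/-- Every constant map is affine. -/
lemma isAffine_const {n : ℕ} (c : B n) : IsAffine (fun _ : B n => c) := by
  match c with
  | none => exact ⟨fun _ => none, none, isEndo_constBot, fun x => rfl⟩
  | some (p, q) =>
      exact ⟨fun _ => some (p, p), some (p, q), isEndo_constIdem p, fun x => by simp [badd]⟩

lemma aplus_const {n : ℕ} (c : B n) : Aplus n (fun _ : B n => c) :=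
  Aplus.affine (isAffine_const c)

lemma aplus_comp_endo {n : ℕ} {e : B n → B n} (he : IsEndo e)
    {f : B n → B n} (hf : Aplus n f) : Aplus n (fun x => e (f x)) := by
  induction hf with
  | affine h =>
      rename_i f0
      obtain ⟨e', c, he', hfe⟩ := h
      refine Aplus.affine ⟨fun x => e (e' x), e c, fun a b => ?_, fun x => ?_⟩
      · show e (e' (badd a b)) = badd (e (e' a)) (e (e' b))
        rw [he', he]
      · show e (f0 x) = badd (e (e' x)) (e c)
        rw [hfe, he]
  | add h1 h2 ih1 ih2 =>
      rename_i g1 g2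
      have heq : (fun x => e (madd g1 g2 x))
          = madd (fun x => e (g1 x)) (fun x => e (g2 x)) := by
        funext x; exact he (g1 x) (g2 x)
      rw [heq]
      exact Aplus.add ih1 ih2

/-- `A⁺(Bₙ)` is closed under the product. -/
lemma aplus_comp {n : ℕ} {f g : B n → B n} (hf : Aplus n f) (hg : Aplus n g) :
    Aplus n (mcomp f g) := by
  induction hg with
  | affine h =>
      rename_i g0
      obtain ⟨e, c, he, hge⟩ := h
      have heq : mcomp f g0 = madd (fun x => e (f x)) (fun _ => c) := by
        funext x; exact hge (f x)
      rw [heq]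
      exact Aplus.add (aplus_comp_endo he hf) (aplus_const c)
  | add h1 h2 ih1 ih2 =>
      exact Aplus.add ih1 ih2

/-- `𝒩 = A⁺(Bₙ) ∪ {0}`: the zero-symmetric affine near-semiring, with a new
zero element `0` (represented by `none`) adjoined to `A⁺(Bₙ)`. -/
abbrev N (n : ℕ) : Type := Option {f : B n → B n // Aplus n f}

instance (n : ℕ) : Zero (N n) := ⟨none⟩

/-- Addition in `𝒩`: `0` is the additive identity; on `A⁺(Bₙ)` it is pointwise addition. -/
instance (n : ℕ) : Add (N n) :=
  ⟨fun a b =>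
    match a, b with
    | none, b => b
    | a, none => a
    | some f, some g => some ⟨madd f.1 g.1, Aplus.add f.2 g.2⟩⟩

/-- Multiplication in `𝒩`: `0` is absorbing; on `A⁺(Bₙ)` it is the product `fg`. -/
instance (n : ℕ) : Mul (N n) :=
  ⟨fun a b =>
    match a, b with
    | some f, some g => some ⟨mcomp f.1 g.1, aplus_comp f.2 g.2⟩
    | _, _ => none⟩

/-- The element of `𝒩` determined by a map in `A⁺(Bₙ)`. -/
def ofA {n : ℕ} {f : B n → B n} (hf : Aplus n f) : N n := some ⟨f, hf⟩

/-- The constant map `ξ_c`, as an element of `𝒩`. -/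
def xiN (n : ℕ) (c : B n) : N n := ofA (aplus_const c)

/-- `𝒞 = C_{Bₙ} ∪ {0}`: the constant maps together with `0`, as a subset of `𝒩`. -/
def Cset (n : ℕ) : Set (N n) := insert 0 (Set.range (xiN n))

/-- The relation `(A⁺(Bₙ) × A⁺(Bₙ)) ∪ {(0,0)}` on `𝒩`. -/
def theta (n : ℕ) (a b : N n) : Prop := (a ≠ 0 ∧ b ≠ 0) ∨ (a = 0 ∧ b = 0)

/-- A congruence of the semigroup `(𝒩, +)`. -/
structure IsAddCong (n : ℕ) (r : N n → N n → Prop) : Prop where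
  refl : ∀ a, r a a
  symm : ∀ {a b}, r a b → r b a
  trans : ∀ {a b c}, r a b → r b c → r a c
  add_right : ∀ {a b} (c), r a b → r (a + c) (b + c)
  add_left : ∀ {a b} (c), r a b → r (c + a) (c + b)

/-- The equivalence relations on `𝒩` whose class of `0` is a right ideal:
compatible with `+` on both sides and with `·` on the right. -/
structure IsRightCong (n : ℕ) (r : N n → N n → Prop) extends IsAddCong n r : Prop where
  mul_right : ∀ {a b} (c), r a b → r (a * c) (b * c)

/-- A congruence of the near-semiring `𝒩`. -/
structure IsNSCong (n : ℕ) (r : N n → N n → Prop) extends IsAddCong n r : Prop where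
  mul_right : ∀ {a b} (c), r a b → r (a * c) (b * c)
  mul_left : ∀ {a b} (c), r a b → r (c * a) (c * b)

/-- The singleton-support map `σ^{(k,l)}_{(p,q)}` sending `(k,l)` to `(p,q)` and
everything else to `ϑ`. -/
def sgl {n : ℕ} (k l p q : Fin n) : B n → B n :=
  fun x => if x = some (k, l) then some (p, q) else none

/-- The `n`-support map `(p,q;σ)` sending `(i,p)` to `(iσ,q)` and everything else to `ϑ`. -/
def nsupp {n : ℕ} (p q : Fin n) (σ : Equiv.Perm (Fin n)) : B n → B n
  | some (i, j) => if j = p then some (σ i, q) else none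
  | none => none

/-- The endomorphism `(i,j) ↦ (iσ, jσ)` of `Bₙ`. -/
def permEndo {n : ℕ} (σ : Equiv.Perm (Fin n)) : B n → B n
  | some (i, j) => some (σ i, σ j)
  | none => none

lemma isEndo_permEndo {n : ℕ} (σ : Equiv.Perm (Fin n)) : IsEndo (permEndo σ) := by
  rintro (_ | ⟨i, j⟩) (_ | ⟨k, l⟩) <;> simp [badd, permEndo]
  by_cases h : j = k
  · simp [h, permEndo]
  · simp [h, fun hc => h (σ.injective hc), permEndo, badd]

lemma aplus_nsupp {n : ℕ} (p q : Fin n) (σ : Equiv.Perm (Fin n)) :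
    Aplus n (nsupp p q σ) := by
  refine Aplus.affine ⟨permEndo σ, some (σ p, q), isEndo_permEndo σ, ?_⟩
  rintro (_ | ⟨i, j⟩)
  · rfl
  · show nsupp p q σ (some (i, j)) = badd (some (σ i, σ j)) (some (σ p, q))
    by_cases h : j = p
    · simp [nsupp, badd, h]
    · simp [nsupp, badd, h, fun hc => h (σ.injective hc)]

lemma sgl_eq_madd {n : ℕ} (k l p q : Fin n) :
    sgl k l p q = madd (fun _ : B n => (some (p, q) : B n)) (nsupp l q (Equiv.swap k q)) := by
  funext x
  rcases x with _ | ⟨i, j⟩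
  · rfl
  · by_cases hj : j = l
    · by_cases hi : i = k
      · subst hi; subst hj
        simp [sgl, madd, nsupp, badd, Equiv.swap_apply_left]
      · have hs : Equiv.swap k q i ≠ q := fun hc =>
          hi ((Equiv.swap k q).injective (hc.trans (Equiv.swap_apply_left k q).symm))
        simp [sgl, madd, nsupp, badd, hj, hi, Ne.symm hs]
    · simp [sgl, madd, nsupp, badd, hj]

lemma aplus_sgl {n : ℕ} (k l p q : Fin n) : Aplus n (sgl k l p q) := by
  rw [sgl_eq_madd]
  exact Aplus.add (aplus_const _) (aplus_nsupp _ _ _)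

/-- The singleton-support map `σ^{(k,l)}_{(p,q)}`, as an element of `𝒩`. -/
def sglN (n : ℕ) (k l p q : Fin n) : N n := ofA (aplus_sgl k l p q)

/-- The `n`-support map `(p,q;σ)`, as an element of `𝒩`. -/
def nsuppN (n : ℕ) (p q : Fin n) (σ : Equiv.Perm (Fin n)) : N n := ofA (aplus_nsupp p q σ)

/-! ### Auxiliary lemmas for Statement 9 -/

lemma badd_eq_some {n : ℕ} {a b : B n} {i j : Fin n} (h : badd a b = some (i, j)) :
    ∃ k, b = some (k, j) := by
  rcases a with _ | ⟨u, v⟩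
  · exact absurd h (by simp [badd])
  rcases b with _ | ⟨k, l⟩
  · exact absurd h (by simp [badd])
  refine ⟨k, ?_⟩
  simp only [badd] at h
  split at h
  · obtain ⟨h1, h2⟩ := Prod.mk.injEq .. ▸ Option.some.inj h
    rw [h2]
  · exact absurd h (by simp)

/-- Every element of `A⁺(Bₙ)` has its image inside `{ϑ} ∪ ([n] × {q})` for some column `q`. -/
lemma aplus_column {n : ℕ} (hn : 0 < n) {f : B n → B n} (hf : Aplus n f) :
    ∃ q : Fin n, ∀ x i j, f x = some (i, j) → j = q := by
  induction hf with
  | affine h =>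
      obtain ⟨e, c, he, hfe⟩ := h
      rcases c with _ | ⟨a, b⟩
      · refine ⟨⟨0, hn⟩, fun x i j hx => ?_⟩
        rw [hfe] at hx
        rcases e x with _ | ⟨u, v⟩ <;> simp [badd] at hx
      · refine ⟨b, fun x i j hx => ?_⟩
        rw [hfe] at hx
        obtain ⟨k, hk⟩ := badd_eq_some hx
        exact (Prod.mk.injEq .. ▸ Option.some.inj hk).2.symm
  | add h1 h2 ih1 ih2 =>
      obtain ⟨q, hq⟩ := ih2
      refine ⟨q, fun x i j hx => ?_⟩
      obtain ⟨k, hk⟩ := badd_eq_some hx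
      exact hq x k j hk

lemma mul_xi_left {n : ℕ} (x : B n) {F : B n → B n} (hF : Aplus n F) :
    xiN n x * ofA hF = xiN n (F x) := by
  show (some _ : N n) = some _
  exact congrArg some (Subtype.ext rfl)

lemma mul_sgl_right {n : ℕ} (c : B n) (p q k l : Fin n) :
    xiN n c * sglN n p q k l = xiN n (sgl p q k l c) := by
  show (some _ : N n) = some _
  exact congrArg some (Subtype.ext rfl)

lemma add_xi_none {n : ℕ} {F : B n → B n} (hF : Aplus n F) :
    ofA hF + xiN n none = xiN n none := by
  show (some _ : N n) = some _
  refine congrArg some (Subtype.ext ?_)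
  funext y
  show badd (F y) none = none
  rcases F y with _ | ⟨i, j⟩ <;> rfl

lemma add_xi_col {n : ℕ} {F : B n → B n} (hF : Aplus n F) (q : Fin n)
    (hcol : ∀ x i j, F x = some (i, j) → j = q) :
    ofA hF + xiN n (some (q, q)) = ofA hF := by
  show (some _ : N n) = some _
  refine congrArg some (Subtype.ext ?_)
  funext y
  show badd (F y) (some (q, q)) = F y
  rcases hFy : F y with _ | ⟨i, j⟩
  · rfl
  · have := hcol y i j hFy
    subst this
    simp [badd]

/-- Let `n ≥ 2` and let `∼` be a non-universal congruence of the near-semiring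
`𝒩`. If two distinct nonzero elements of `𝒩` are congruent, then `∼` equals
`(A⁺(Bₙ) × A⁺(Bₙ)) ∪ {(0,0)}`. -/
theorem stmt9 (n : ℕ) (hn : 2 ≤ n) (r : N n → N n → Prop) (hcong : IsNSCong n r)
    (hnotuniv : ¬ ∀ a b : N n, r a b)
    (f g : N n) (hf0 : f ≠ 0) (hg0 : g ≠ 0) (hfg : f ≠ g) (h : r f g) :
    ∀ a b : N n, r a b ↔ theta n a b := by
  have hn0 : 0 < n := by omega
  -- Step 0: extract the underlying maps of f and g.
  rcases f with _ | ⟨F, hF⟩; · exact absurd rfl hf0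
  rcases g with _ | ⟨G, hG⟩; · exact absurd rfl hg0
  have hFG : F ≠ G := fun hEq => hfg (by simp [hEq])
  obtain ⟨x, hx⟩ := Function.ne_iff.mp hFG
  -- Step 1: two distinct constants are related.
  have hcd : r (xiN n (F x)) (xiN n (G x)) := by
    have := hcong.mul_left (xiN n x) h
    rwa [show (some ⟨F, hF⟩ : N n) = ofA hF from rfl,
      show (some ⟨G, hG⟩ : N n) = ofA hG from rfl,
      mul_xi_left x hF, mul_xi_left x hG] at this
  -- Step 2: from a pair of distinct related constants, every constant ξ_{(k,l)}
  -- is related to ξ_ϑ.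
  have hsgl : ∀ k l : Fin n, r (xiN n (some (k, l))) (xiN n none) := by
    have key : ∀ c d : B n, c ≠ d → r (xiN n c) (xiN n d) →
        ∀ k l : Fin n, r (xiN n (some (k, l))) (xiN n none) := by
      rintro (_ | ⟨p, q⟩) d hne hr k l
      · -- c = ϑ, so d = some (p, q)
        rcases d with _ | ⟨p, q⟩
        · exact absurd rfl hne
        · have := hcong.mul_right (sglN n p q k l) (hcong.symm hr)
          rw [mul_sgl_right, mul_sgl_right] at this
          have h1 : sgl p q k l (some (p, q)) = some (k, l) := by simp [sgl]
          have h2 : sgl p q k l (none : B n) = none := rfl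
          rwa [h1, h2] at this
      · have := hcong.mul_right (sglN n p q k l) hr
        rw [mul_sgl_right, mul_sgl_right] at this
        have h1 : sgl p q k l (some (p, q)) = some (k, l) := by simp [sgl]
        have h2 : sgl p q k l d = none := by
          simp only [sgl, if_neg (fun hc : d = some (p, q) => hne hc.symm)]
        rwa [h1, h2] at this
    exact key (F x) (G x) hx hcd
  -- Step 3: every nonzero element is related to ξ_ϑ.
  have hnonzero : ∀ {H : B n → B n} (hH : Aplus n H), r (ofA hH) (xiN n none) := by
    intro H hH
    obtain ⟨q, hq⟩ := aplus_column hn0 hH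
    have := hcong.add_left (ofA hH) (hsgl q q)
    rwa [add_xi_col hH q hq, add_xi_none hH] at this
  -- Step 4: any two nonzero elements are related.
  have hall : ∀ {H K : B n → B n} (hH : Aplus n H) (hK : Aplus n K),
      r (ofA hH) (ofA hK) := fun hH hK =>
    hcong.trans (hnonzero hH) (hcong.symm (hnonzero hK))
  -- Step 5: 0 is not related to any nonzero element (else r is universal).
  have hzero : ∀ {a : N n}, a ≠ 0 → ¬ r 0 a := by
    intro a ha hra
    apply hnotuniv
    intro u v
    have haux : ∀ w : N n, r 0 w := by
      rintro (_ | ⟨W, hW⟩)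
      · exact hcong.refl 0
      · rcases a with _ | ⟨A, hA⟩
        · exact absurd rfl ha
        · exact hcong.trans hra (hall hA hW)
    rcases u with _ | ⟨U, hU⟩
    · exact haux v
    · rcases v with _ | ⟨V, hV⟩
      · exact hcong.symm (haux _)
      · exact hall hU hV
  -- Conclusion.
  intro a b
  constructor
  · intro hab
    rcases a with _ | ⟨A, hA⟩
    · rcases b with _ | ⟨B', hB⟩
      · exact Or.inr ⟨rfl, rfl⟩
      · exact absurd hab (hzero (fun hc : (some ⟨B', hB⟩ : N n) = 0 => Option.some_ne_none _ hc))
    · rcases b with _ | ⟨B', hB⟩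
      · exact absurd (hcong.symm hab)
          (hzero (fun hc : (some ⟨A, hA⟩ : N n) = 0 => Option.some_ne_none _ hc))
      · exact Or.inl ⟨fun hc => Option.some_ne_none _ hc, fun hc => Option.some_ne_none _ hc⟩
  · rintro (⟨ha, hb⟩ | ⟨ha, hb⟩)
    · rcases a with _ | ⟨A, hA⟩
      · exact absurd rfl ha
      rcases b with _ | ⟨B', hB⟩
      · exact absurd rfl hb
      exact hall hA hB
    · rw [ha, hb]; exact hcong.refl 0
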